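/- Let n = 2k and let P ∈ H_n be a rank-k orthogonal projection. Then S(P) ∪ (−S(P)) does not contain any two-dimensional real linear subspace: if A, B ∈ H_n are nonzero with span_ℝ{A, B} ⊆ S(P) ∪ (−S(P)), then A and B are linearly dependent over ℝ. -/

import Mathlib

open Matrix

/-- `P` is an orthogonal projection of rank `k`. -/
def IsProjOfRank {m : Type*} [Fintype m] [DecidableEq m]
    (P : Matrix m m ℂ) (k : ℕ) : Prop :=
  P * P = P ∧ Pᴴ = P ∧ P.rank = k

/-- The `k`-numerical range `W_k(A) = { tr (A P) : P an orthogonal projection of rank k }`. -/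
def WK {m : Type*} [Fintype m] [DecidableEq m] (k : ℕ) (A : Matrix m m ℂ) : Set ℂ :=
  {z | ∃ P : Matrix m m ℂ, IsProjOfRank P k ∧ z = (A * P).trace}

/-- The `k`-numerical radius `w_k(A) = max { |tr (A P)| : P a rank-k orthogonal projection }`. -/
noncomputable def wk {m : Type*} [Fintype m] [DecidableEq m] (k : ℕ) (A : Matrix m m ℂ) : ℝ :=
  sSup {r : ℝ | ∃ P : Matrix m m ℂ, IsProjOfRank P k ∧ r = ‖(A * P).trace‖}

/-- `A` and `B` are parallel with respect to the `k`-numerical radius. -/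
noncomputable def ParallelWk {m : Type*} [Fintype m] [DecidableEq m]
    (k : ℕ) (A B : Matrix m m ℂ) : Prop :=
  ∃ μ : ℂ, ‖μ‖ = 1 ∧ wk k (A + μ • B) = wk k A + wk k B

/-- Sum of the `k` largest eigenvalues of a Hermitian matrix (`0` if not Hermitian). -/
noncomputable def sumKLargest {m : Type*} [Fintype m] [DecidableEq m]
    (k : ℕ) (A : Matrix m m ℂ) : ℝ :=
  if h : A.IsHermitian then
    sSup {r : ℝ | ∃ s : Finset m, s.card = k ∧ r = ∑ i ∈ s, h.eigenvalues i}
  else 0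

/-- Sum of the `k` smallest eigenvalues of a Hermitian matrix (`0` if not Hermitian). -/
noncomputable def sumKSmallest {m : Type*} [Fintype m] [DecidableEq m]
    (k : ℕ) (A : Matrix m m ℂ) : ℝ :=
  if h : A.IsHermitian then
    sInf {r : ℝ | ∃ s : Finset m, s.card = k ∧ r = ∑ i ∈ s, h.eigenvalues i}
  else 0

/-- Entries of an orthogonal projection have absolute value at most `1`. -/
lemma proj_entry_le {n : ℕ} {Q : Matrix (Fin n) (Fin n) ℂ}
    (h1 : Q * Q = Q) (h2 : Qᴴ = Q) (a b : Fin n) : ‖Q a b‖ ≤ 1 := by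
  have key : ∀ c : Fin n, Q c c = ((∑ j, Complex.normSq (Q c j) : ℝ) : ℂ) := by
    intro c
    conv_lhs => rw [← h1]
    rw [Matrix.mul_apply]
    push_cast
    refine Finset.sum_congr rfl fun j _ => ?_
    have : Q j c = (starRingEnd ℂ) (Q c j) := by
      conv_lhs => rw [← h2]
      simp [Matrix.conjTranspose_apply]
    rw [this, Complex.mul_conj]
  have habs : ∀ c : Fin n, ‖Q c c‖ = ∑ j, Complex.normSq (Q c j) := by
    intro c
    rw [key c, Complex.norm_real, Real.norm_eq_abs, abs_of_nonneg]
    exact Finset.sum_nonneg fun j _ => Complex.normSq_nonneg _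
  have h3 : Complex.normSq (Q a a) ≤ ‖Q a a‖ := by
    rw [habs a]
    exact Finset.single_le_sum (fun j _ => Complex.normSq_nonneg _) (Finset.mem_univ a)
  have h4 : ‖Q a a‖ ≤ 1 := by
    have := Complex.sq_norm (Q a a)
    nlinarith [norm_nonneg (Q a a)]
  have h5 : Complex.normSq (Q a b) ≤ 1 := by
    calc Complex.normSq (Q a b) ≤ ∑ j, Complex.normSq (Q a j) :=
          Finset.single_le_sum (fun j _ => Complex.normSq_nonneg _) (Finset.mem_univ b)
      _ = ‖Q a a‖ := (habs a).symm
      _ ≤ 1 := h4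
  have := Complex.sq_norm (Q a b)
  nlinarith [norm_nonneg (Q a b)]

/-- For Hermitian `M` and `Q` with `Qᴴ = Q`, `tr (M Q)` is real. -/
lemma trace_real {n : ℕ} {M Q : Matrix (Fin n) (Fin n) ℂ}
    (hM : M.IsHermitian) (hQ : Qᴴ = Q) : ((M * Q).trace.re : ℂ) = (M * Q).trace := by
  rw [← Complex.conj_eq_iff_re]
  calc (starRingEnd ℂ) (M * Q).trace = ((M * Q)ᴴ).trace := by
        rw [Matrix.trace_conjTranspose]; rfl
    _ = (Qᴴ * Mᴴ).trace := by rw [Matrix.conjTranspose_mul]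
    _ = (M * Q).trace := by rw [hQ, hM.eq, Matrix.trace_mul_comm]

/-- The spectral projection onto the eigenvectors indexed by a `k`-element set `s` is a
rank-`k` orthogonal projection, and the trace of `M` against it is the sum of the
corresponding eigenvalues. -/
lemma proj_of_subset {n k : ℕ} {M : Matrix (Fin n) (Fin n) ℂ} (hM : M.IsHermitian)
    (s : Finset (Fin n)) (hs : s.card = k) :
    IsProjOfRank ((hM.eigenvectorUnitary : Matrix (Fin n) (Fin n) ℂ) *
      diagonal (fun i => if i ∈ s then (1:ℂ) else 0) *
      star (hM.eigenvectorUnitary : Matrix (Fin n) (Fin n) ℂ)) k ∧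
    (M * ((hM.eigenvectorUnitary : Matrix (Fin n) (Fin n) ℂ) *
      diagonal (fun i => if i ∈ s then (1:ℂ) else 0) *
      star (hM.eigenvectorUnitary : Matrix (Fin n) (Fin n) ℂ))).trace
      = ∑ i ∈ s, (hM.eigenvalues i : ℂ) := by
  set U : Matrix (Fin n) (Fin n) ℂ := (hM.eigenvectorUnitary : Matrix (Fin n) (Fin n) ℂ) with hU
  set w : Fin n → ℂ := fun i => if i ∈ s then (1:ℂ) else 0 with hw
  have hU1 : U * star U = 1 := (Matrix.mem_unitaryGroup_iff).mp hM.eigenvectorUnitary.2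
  have hU2 : star U * U = 1 := (Matrix.mem_unitaryGroup_iff').mp hM.eigenvectorUnitary.2
  have hfun : (fun i => w i * w i) = w := by
    funext i
    by_cases h : i ∈ s <;> simp [hw, h]
  have hww : diagonal w * diagonal w = diagonal w := by
    rw [diagonal_mul_diagonal]
    exact congrArg diagonal hfun
  refine ⟨⟨?_, ?_, ?_⟩, ?_⟩
  · calc U * diagonal w * star U * (U * diagonal w * star U)
        = U * diagonal w * (star U * U) * diagonal w * star U := by
          simp only [Matrix.mul_assoc]
      _ = U * diagonal w * star U := by
          rw [hU2, Matrix.mul_one, Matrix.mul_assoc U, hww]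
  · have hwstar : star w = w := by
      funext i
      by_cases h : i ∈ s <;> simp [hw, h]
    rw [Matrix.conjTranspose_mul, Matrix.conjTranspose_mul, Matrix.diagonal_conjTranspose,
      hwstar, Matrix.star_eq_conjTranspose, Matrix.conjTranspose_conjTranspose,
      ← Matrix.star_eq_conjTranspose, Matrix.mul_assoc]
  · have hdu : IsUnit U.det := Matrix.isUnit_det_of_right_inverse hU1
    have hdsu : IsUnit (star U).det := Matrix.isUnit_det_of_right_inverse hU2
    rw [Matrix.rank_mul_eq_left_of_isUnit_det _ _ hdsu,
      Matrix.rank_mul_eq_right_of_isUnit_det _ _ hdu, Matrix.rank_diagonal]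
    rw [← hs, ← Fintype.card_coe]
    apply Fintype.card_congr
    apply Equiv.subtypeEquivRight
    intro i
    by_cases h : i ∈ s <;> simp [hw, h]
  · conv_lhs => rw [hM.spectral_theorem]
    calc (U * diagonal (RCLike.ofReal ∘ hM.eigenvalues) * star U *
            (U * diagonal w * star U)).trace
        = (U * (diagonal (RCLike.ofReal ∘ hM.eigenvalues) * diagonal w * star U)).trace := by
          congr 1
          calc U * diagonal (RCLike.ofReal ∘ hM.eigenvalues) * star U *
              (U * diagonal w * star U)
              = U * diagonal (RCLike.ofReal ∘ hM.eigenvalues) * (star U * U) *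
                (diagonal w * star U) := by simp only [Matrix.mul_assoc]
            _ = U * (diagonal (RCLike.ofReal ∘ hM.eigenvalues) * diagonal w * star U) := by
                rw [hU2, Matrix.mul_one]; simp only [Matrix.mul_assoc]
      _ = (diagonal (RCLike.ofReal ∘ hM.eigenvalues) * diagonal w).trace := by
          rw [Matrix.trace_mul_comm]
          simp only [Matrix.mul_assoc, hU2, Matrix.mul_one]
      _ = ∑ i ∈ s, (hM.eigenvalues i : ℂ) := by
          rw [Matrix.diagonal_mul_diagonal, Matrix.trace_diagonal]
          simp only [Function.comp_apply, hw, mul_ite, mul_one, mul_zero]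
          rw [Finset.sum_ite_mem, Finset.univ_inter]
          rfl

/-- For `n = 2k`, a Hermitian matrix with vanishing `k`-numerical radius is zero. -/
lemma wk_eq_zero_imp {n k : ℕ} (hk : 1 ≤ k) (hn : n = 2 * k)
    {M : Matrix (Fin n) (Fin n) ℂ} (hM : M.IsHermitian)
    {P₀ : Matrix (Fin n) (Fin n) ℂ} (hP₀ : IsProjOfRank P₀ k)
    (h : wk k M = 0) : M = 0 := by
  have hbdd : BddAbove {r : ℝ | ∃ Q : Matrix (Fin n) (Fin n) ℂ,
      IsProjOfRank Q k ∧ r = ‖(M * Q).trace‖} := by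
    refine ⟨∑ i, ∑ j, ‖M i j‖, ?_⟩
    rintro r ⟨Q, hQ, rfl⟩
    calc ‖(M * Q).trace‖
        = ‖∑ i, ∑ j, M i j * Q j i‖ := by
          simp only [Matrix.trace, Matrix.diag, Matrix.mul_apply]
      _ ≤ ∑ i, ‖∑ j, M i j * Q j i‖ := norm_sum_le _ _
      _ ≤ ∑ i, ∑ j, ‖M i j‖ := by
          refine Finset.sum_le_sum fun i _ => ?_
          calc ‖∑ j, M i j * Q j i‖
              ≤ ∑ j, ‖M i j * Q j i‖ := norm_sum_le _ _
            _ ≤ ∑ j, ‖M i j‖ := by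
                refine Finset.sum_le_sum fun j _ => ?_
                rw [norm_mul (M i j) (Q j i)]
                exact mul_le_of_le_one_right (norm_nonneg _)
                  (proj_entry_le hQ.1 hQ.2.1 j i)
  have htr : ∀ Q : Matrix (Fin n) (Fin n) ℂ, IsProjOfRank Q k → (M * Q).trace = 0 := by
    intro Q hQ
    have hle : ‖(M * Q).trace‖ ≤ wk k M := le_csSup hbdd ⟨Q, hQ, rfl⟩
    rw [h] at hle
    have hnn := norm_nonneg ((M * Q).trace)
    exact norm_eq_zero.mp (le_antisymm hle hnn)
  have hsum : ∀ s : Finset (Fin n), s.card = k → ∑ i ∈ s, hM.eigenvalues i = 0 := by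
    intro s hs
    obtain ⟨hproj, htrace⟩ := proj_of_subset hM s hs
    have h0 := htr _ hproj
    rw [htrace] at h0
    exact_mod_cast h0
  have hcard : ∀ i j : Fin n, hM.eigenvalues i = hM.eigenvalues j := by
    intro i j
    rcases eq_or_ne i j with rfl | hij
    · rfl
    have hsub : k - 1 ≤ (((Finset.univ : Finset (Fin n)).erase i).erase j).card := by
      rw [Finset.card_erase_of_mem (Finset.mem_erase.mpr ⟨hij.symm, Finset.mem_univ j⟩),
        Finset.card_erase_of_mem (Finset.mem_univ i), Finset.card_univ, Fintype.card_fin]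
      omega
    obtain ⟨t, hts, htc⟩ := Finset.exists_subset_card_eq hsub
    have hit : i ∉ t := fun hmem =>
      (Finset.mem_erase.mp (Finset.mem_erase.mp (hts hmem)).2).1 rfl
    have hjt : j ∉ t := fun hmem => (Finset.mem_erase.mp (hts hmem)).1 rfl
    have h1 := hsum (insert i t) (by rw [Finset.card_insert_of_notMem hit, htc]; omega)
    have h2 := hsum (insert j t) (by rw [Finset.card_insert_of_notMem hjt, htc]; omega)
    rw [Finset.sum_insert hit] at h1
    rw [Finset.sum_insert hjt] at h2
    linarith
  have hzero : ∀ i, hM.eigenvalues i = 0 := by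
    obtain ⟨s, -, hsc⟩ := Finset.exists_subset_card_eq
      (show k ≤ (Finset.univ : Finset (Fin n)).card by
        rw [Finset.card_univ, Fintype.card_fin]; omega)
    obtain ⟨i0, hi0⟩ := Finset.card_pos.mp (by omega : 0 < s.card)
    have hconst : ∑ i ∈ s, hM.eigenvalues i = (s.card : ℝ) * hM.eigenvalues i0 := by
      rw [Finset.sum_congr rfl fun i _ => hcard i i0, Finset.sum_const, nsmul_eq_mul]
    have h0 := hsum s hsc
    rw [hconst, hsc] at h0
    have hk' : (k : ℝ) ≠ 0 := by positivity
    have hlam0 : hM.eigenvalues i0 = 0 := by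
      rcases mul_eq_zero.mp h0 with h0' | h0'
      · exact absurd h0' hk'
      · exact h0' 
    intro i
    rw [hcard i i0, hlam0]
  have hdiag : (RCLike.ofReal ∘ hM.eigenvalues : Fin n → ℂ) = fun _ => 0 := by
    funext i
    simp only [Function.comp_apply, hzero i]
    simp
  conv_lhs => rw [hM.spectral_theorem]
  rw [hdiag, Matrix.diagonal_zero, map_zero]

theorem stmt_17 (n k : ℕ) (hk : 1 ≤ k) (hn : n = 2 * k)
    (P : Matrix (Fin n) (Fin n) ℂ) (hP : IsProjOfRank P k)
    (A B : Matrix (Fin n) (Fin n) ℂ) (hA : A.IsHermitian) (hB : B.IsHermitian)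
    (hA0 : A ≠ 0) (hB0 : B ≠ 0)
    (hspan : ∀ a b : ℝ,
      ((a • A + b • B) * P).trace = (wk k (a • A + b • B) : ℂ) ∨
      ((-(a • A + b • B)) * P).trace = (wk k (-(a • A + b • B)) : ℂ)) :
    ∃ c d : ℝ, ¬(c = 0 ∧ d = 0) ∧ c • A + d • B = 0 := by
  have hreal : ∀ c d : ℝ, ((c • A + d • B) * P).trace =
      ((c * ((A * P).trace.re) + d * ((B * P).trace.re) : ℝ) : ℂ) := by
    intro c d
    rw [Matrix.add_mul, Matrix.trace_add, Matrix.smul_mul, Matrix.smul_mul,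
      Matrix.trace_smul, Matrix.trace_smul, ← trace_real hA hP.2.1, ← trace_real hB hP.2.1,
      Complex.real_smul, Complex.real_smul]
    simp only [Complex.ofReal_re]
    push_cast
    ring
  have key : ∀ c d : ℝ, c * (A * P).trace.re + d * (B * P).trace.re = 0 →
      c • A + d • B = 0 := by
    intro c d h0
    have htr0 : ((c • A + d • B) * P).trace = 0 := by
      rw [hreal c d, h0, Complex.ofReal_zero]
    have hherm : (c • A + d • B).IsHermitian := by
      have h1 : (c • A).IsHermitian := by
        unfold Matrix.IsHermitian
        rw [Matrix.conjTranspose_smul, hA.eq, star_trivial]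
      have h2 : (d • B).IsHermitian := by
        unfold Matrix.IsHermitian
        rw [Matrix.conjTranspose_smul, hB.eq, star_trivial]
      exact h1.add h2
    rcases hspan c d with hcase | hcase
    · have hw0 : wk k (c • A + d • B) = 0 := by
        have : (wk k (c • A + d • B) : ℂ) = 0 := by rw [← hcase, htr0]
        exact_mod_cast this
      exact wk_eq_zero_imp hk hn hherm hP hw0
    · have htr0' : ((-(c • A + d • B)) * P).trace = 0 := by
        rw [Matrix.neg_mul, Matrix.trace_neg, htr0, neg_zero]
      have hw0 : wk k (-(c • A + d • B)) = 0 := by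
        have : (wk k (-(c • A + d • B)) : ℂ) = 0 := by rw [← hcase, htr0']
        exact_mod_cast this
      have := wk_eq_zero_imp hk hn hherm.neg hP hw0
      exact neg_eq_zero.mp this
  by_cases h0 : (A * P).trace.re = 0 ∧ (B * P).trace.re = 0
  · exfalso
    apply hA0
    have := key 1 0 (by rw [h0.1]; ring)
    simpa using this
  · refine ⟨(B * P).trace.re, -(A * P).trace.re, ?_, key _ _ (by ring)⟩
    rintro ⟨hb, ha⟩
    exact h0 ⟨neg_eq_zero.mp ha, hb⟩
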